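/- Fix n ≥ 2 and define N(m) = ∑ d(p,q) over all pairs of positive integers (p,q) with 2q(p+n−1) ≤ m, where d(p,q) = (n−1)(n+p+q−1)/(pq)·C(n+p−2,p−1)·C(n+q−2,q−1). Then there exists c > 0 such that N(m) ≤ c·m^n for all m ≥ 1. -/

import Mathlib

open Finset

lemma kohn_choose_le (n p : ℕ) (hn : 2 ≤ n) (hp : 1 ≤ p) :
    (n + p - 2).choose (p - 1) ≤ n ^ (n-1) * p ^ (n-1) := by
  have hnp : n + p - 2 ≤ n * p := by
    rcases Nat.lt_or_ge p 2 with h | h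
    · have hp1 : p = 1 := by omega
      subst hp1; simp only [mul_one]; omega
    · exact le_trans (by omega) (Nat.add_le_mul hn h)
  have h1 : (n + p - 2).choose (p - 1) = (n + p - 2).choose (n - 1) := by
    have hk : n - 1 ≤ n + p - 2 := by omega
    have he : (n + p - 2) - (n - 1) = p - 1 := by omega
    rw [← he, Nat.choose_symm hk]
  rw [h1, ← mul_pow]
  calc (n + p - 2).choose (n - 1) ≤ (n + p - 2) ^ (n - 1) := Nat.choose_le_pow _ _
    _ ≤ (n * p) ^ (n - 1) := Nat.pow_le_pow_left hnp _

lemma kohn_core (n p q : ℕ) (hn : 2 ≤ n) (hp : 1 ≤ p) (hq : 1 ≤ q) :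
    (n-1) * (n+p+q-1) * ((n+p-2).choose (p-1)) * ((n+q-2).choose (q-1))
      ≤ (n-1) * n^(2*n-1) * (p^(n-1)*q^(n-2) + p^(n-2)*q^(n-1)) * (p*q) := by
  have h1 : n + p + q - 1 ≤ n * (p + q) :=
    le_trans (by omega) (Nat.add_le_mul hn (show 2 ≤ p + q by omega))
  have h2 := kohn_choose_le n p hn hp
  have h3 := kohn_choose_le n q hn hq
  calc (n-1) * (n+p+q-1) * ((n+p-2).choose (p-1)) * ((n+q-2).choose (q-1))
      ≤ (n-1) * (n*(p+q)) * (n^(n-1)*p^(n-1)) * (n^(n-1)*q^(n-1)) := by gcongr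
    _ = (n-1) * n^(2*n-1) * (p^(n-1)*q^(n-2) + p^(n-2)*q^(n-1)) * (p*q) := by
        have e1 : n * (n^(n-1) * n^(n-1)) = n^(2*n-1) := by
          rw [← pow_add, ← pow_succ']
          congr 1; omega
        have e2 : p^(n-2) * p = p^(n-1) := by rw [← pow_succ]; congr 1; omega
        have e3 : q^(n-2) * q = q^(n-1) := by rw [← pow_succ]; congr 1; omega
        rw [← e1, ← e2, ← e3]; ring

lemma kohn_term_le (n p q : ℕ) (hn : 2 ≤ n) (hp : 1 ≤ p) (hq : 1 ≤ q) :
    ((n : ℚ) - 1) * ((n : ℚ) + p + q - 1) / ((p : ℚ) * q)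
      * ((n + p - 2).choose (p - 1) : ℚ) * ((n + q - 2).choose (q - 1) : ℚ)
    ≤ (((n-1) * n^(2*n-1) * (p^(n-1)*q^(n-2) + p^(n-2)*q^(n-1)) : ℕ) : ℚ) := by
  have hp0 : (0:ℚ) < (p:ℚ) := by exact_mod_cast hp
  have hq0 : (0:ℚ) < (q:ℚ) := by exact_mod_cast hq
  have hpq : (0:ℚ) < (p:ℚ) * q := mul_pos hp0 hq0
  rw [div_mul_eq_mul_div, div_mul_eq_mul_div, div_le_iff₀ hpq]
  have h1 : ((n:ℚ) - 1) = ((n - 1 : ℕ) : ℚ) := by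
    rw [Nat.cast_sub (by omega : 1 ≤ n), Nat.cast_one]
  have h2 : ((n:ℚ) + p + q - 1) = ((n + p + q - 1 : ℕ) : ℚ) := by
    rw [Nat.cast_sub (by omega : 1 ≤ n + p + q)]
    push_cast; ring
  rw [h1, h2]
  calc ((n-1:ℕ):ℚ) * ((n+p+q-1:ℕ):ℚ) * ((n + p - 2).choose (p - 1) : ℚ)
        * ((n + q - 2).choose (q - 1) : ℚ)
      = (((n-1) * (n+p+q-1) * ((n+p-2).choose (p-1)) * ((n+q-2).choose (q-1)) : ℕ) : ℚ) := by
        push_cast; ring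
    _ ≤ (((n-1) * n^(2*n-1) * (p^(n-1)*q^(n-2) + p^(n-2)*q^(n-1)) * (p*q) : ℕ) : ℚ) := by
        exact_mod_cast kohn_core n p q hn hp hq
    _ = (((n-1) * n^(2*n-1) * (p^(n-1)*q^(n-2) + p^(n-2)*q^(n-1)) : ℕ) : ℚ) * ((p:ℚ) * q) := by
        push_cast; ring

lemma kohn_sumA (n m : ℕ) (hn : 2 ≤ n) :
    ∑ pq ∈ (Finset.Icc 1 m ×ˢ Finset.Icc 1 m).filter
        (fun pq => 2 * pq.2 * (pq.1 + n - 1) ≤ m),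
      pq.1^(n-1) * pq.2^(n-2) ≤ m^n := by
  rw [Finset.sum_filter, Finset.sum_product]
  calc ∑ p ∈ Icc 1 m, ∑ q ∈ Icc 1 m,
        (if 2 * q * (p + n - 1) ≤ m then p^(n-1) * q^(n-2) else 0)
      ≤ ∑ _p ∈ Icc 1 m, m^(n-1) := by
        apply Finset.sum_le_sum
        intro p hp
        obtain ⟨hp1, hpm⟩ := Finset.mem_Icc.mp hp
        set Q := m / (2 * p) with hQ
        have hsub : (Icc 1 m).filter (fun q => 2 * q * (p + n - 1) ≤ m) ⊆ Icc 1 Q := by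
          intro q hq
          obtain ⟨hq1, hcond⟩ := Finset.mem_filter.mp hq
          obtain ⟨hq1', _⟩ := Finset.mem_Icc.mp hq1
          refine Finset.mem_Icc.mpr ⟨hq1', ?_⟩
          rw [hQ, Nat.le_div_iff_mul_le (by omega : 0 < 2 * p)]
          calc q * (2 * p) = 2 * q * p := by ring
            _ ≤ 2 * q * (p + n - 1) := Nat.mul_le_mul_left _ (by omega)
            _ ≤ m := hcond
        have hpQ : p * Q ≤ m := by
          calc p * Q ≤ Q * (2 * p) := by
                rw [mul_comm]; exact Nat.mul_le_mul_left _ (by omega)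
            _ ≤ m := Nat.div_mul_le_self m (2*p)
        calc ∑ q ∈ Icc 1 m, (if 2 * q * (p + n - 1) ≤ m then p^(n-1) * q^(n-2) else 0)
            = ∑ q ∈ (Icc 1 m).filter (fun q => 2 * q * (p + n - 1) ≤ m),
                p^(n-1) * q^(n-2) := (Finset.sum_filter _ _).symm
          _ ≤ ∑ q ∈ Icc 1 Q, p^(n-1) * q^(n-2) :=
              Finset.sum_le_sum_of_subset hsub
          _ ≤ ∑ _q ∈ Icc 1 Q, p^(n-1) * Q^(n-2) := by
              apply Finset.sum_le_sum
              intro q hq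
              exact Nat.mul_le_mul_left _
                (Nat.pow_le_pow_left (Finset.mem_Icc.mp hq).2 _)
          _ = Q * (p^(n-1) * Q^(n-2)) := by
              rw [Finset.sum_const, Nat.card_Icc, smul_eq_mul, Nat.add_sub_cancel]
          _ = (p * Q)^(n-1) := by
              rw [mul_pow]
              have : Q * Q^(n-2) = Q^(n-1) := by rw [← pow_succ']; congr 1; omega
              rw [← this]; ring
          _ ≤ m^(n-1) := Nat.pow_le_pow_left hpQ _
    _ = m^n := by
        rw [Finset.sum_const, Nat.card_Icc, smul_eq_mul]
        have : m + 1 - 1 = m := by omega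
        have h2 : n - 1 + 1 = n := by omega
        rw [this, ← pow_succ', h2]

lemma kohn_sumB (n m : ℕ) (hn : 2 ≤ n) :
    ∑ pq ∈ (Finset.Icc 1 m ×ˢ Finset.Icc 1 m).filter
        (fun pq => 2 * pq.2 * (pq.1 + n - 1) ≤ m),
      pq.1^(n-2) * pq.2^(n-1) ≤ m^n := by
  rw [Finset.sum_filter, Finset.sum_product, Finset.sum_comm]
  calc ∑ q ∈ Icc 1 m, ∑ p ∈ Icc 1 m,
        (if 2 * q * (p + n - 1) ≤ m then p^(n-2) * q^(n-1) else 0)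
      ≤ ∑ _q ∈ Icc 1 m, m^(n-1) := by
        apply Finset.sum_le_sum
        intro q hq
        obtain ⟨hq1, hqm⟩ := Finset.mem_Icc.mp hq
        set P := m / (2 * q) with hP
        have hsub : (Icc 1 m).filter (fun p => 2 * q * (p + n - 1) ≤ m) ⊆ Icc 1 P := by
          intro p hp
          obtain ⟨hp1, hcond⟩ := Finset.mem_filter.mp hp
          obtain ⟨hp1', _⟩ := Finset.mem_Icc.mp hp1
          refine Finset.mem_Icc.mpr ⟨hp1', ?_⟩
          rw [hP, Nat.le_div_iff_mul_le (by omega : 0 < 2 * q)]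
          calc p * (2 * q) = 2 * q * p := by ring
            _ ≤ 2 * q * (p + n - 1) := Nat.mul_le_mul_left _ (by omega)
            _ ≤ m := hcond
        have hqP : q * P ≤ m := by
          calc q * P ≤ P * (2 * q) := by
                rw [mul_comm]; exact Nat.mul_le_mul_left _ (by omega)
            _ ≤ m := Nat.div_mul_le_self m (2*q)
        calc ∑ p ∈ Icc 1 m, (if 2 * q * (p + n - 1) ≤ m then p^(n-2) * q^(n-1) else 0)
            = ∑ p ∈ (Icc 1 m).filter (fun p => 2 * q * (p + n - 1) ≤ m),
                p^(n-2) * q^(n-1) := (Finset.sum_filter _ _).symm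
          _ ≤ ∑ p ∈ Icc 1 P, p^(n-2) * q^(n-1) :=
              Finset.sum_le_sum_of_subset hsub
          _ ≤ ∑ _p ∈ Icc 1 P, P^(n-2) * q^(n-1) := by
              apply Finset.sum_le_sum
              intro p hp
              exact Nat.mul_le_mul_right _
                (Nat.pow_le_pow_left (Finset.mem_Icc.mp hp).2 _)
          _ = P * (P^(n-2) * q^(n-1)) := by
              rw [Finset.sum_const, Nat.card_Icc, smul_eq_mul, Nat.add_sub_cancel]
          _ = (q * P)^(n-1) := by
              rw [mul_pow]
              have : P * P^(n-2) = P^(n-1) := by rw [← pow_succ']; congr 1; omega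
              rw [← this]; ring
          _ ≤ m^(n-1) := Nat.pow_le_pow_left hqP _
    _ = m^n := by
        rw [Finset.sum_const, Nat.card_Icc, smul_eq_mul]
        have h1 : m + 1 - 1 = m := by omega
        have h2 : n - 1 + 1 = n := by omega
        rw [h1, ← pow_succ', h2]

/-- Upper bound for the eigenvalue counting function of the Kohn Laplacian on
`L²(S^{2n-1})`: with `N(m) = ∑ d(p,q)` over positive integer pairs `(p,q)` with
`2q(p+n-1) ≤ m`, where `d(p,q) = (n-1)(n+p+q-1)/(pq)·C(n+p-2,p-1)·C(n+q-2,q-1)`,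
there is `c > 0` with `N(m) ≤ c·m^n` for all `m ≥ 1`. -/
theorem stmt7 (n : ℕ) (hn : 2 ≤ n) :
    ∃ c : ℚ, 0 < c ∧ ∀ m : ℕ, 1 ≤ m →
      (∑ pq ∈ (Finset.Icc 1 m ×ˢ Finset.Icc 1 m).filter
          (fun pq => 2 * pq.2 * (pq.1 + n - 1) ≤ m),
        ((n : ℚ) - 1) * ((n : ℚ) + pq.1 + pq.2 - 1) / ((pq.1 : ℚ) * pq.2)
          * ((n + pq.1 - 2).choose (pq.1 - 1) : ℚ)
          * ((n + pq.2 - 2).choose (pq.2 - 1) : ℚ))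
        ≤ c * (m : ℚ) ^ n := by
  refine ⟨((2 * ((n-1) * n^(2*n-1)) : ℕ) : ℚ), ?_, ?_⟩
  · have : 0 < 2 * ((n-1) * n^(2*n-1)) :=
      Nat.mul_pos (by omega) (Nat.mul_pos (by omega) (Nat.pow_pos (by omega)))
    exact_mod_cast this
  · intro m hm
    set S := (Finset.Icc 1 m ×ˢ Finset.Icc 1 m).filter
        (fun pq => 2 * pq.2 * (pq.1 + n - 1) ≤ m) with hS
    have step1 : (∑ pq ∈ S,
        ((n : ℚ) - 1) * ((n : ℚ) + pq.1 + pq.2 - 1) / ((pq.1 : ℚ) * pq.2)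
          * ((n + pq.1 - 2).choose (pq.1 - 1) : ℚ)
          * ((n + pq.2 - 2).choose (pq.2 - 1) : ℚ))
        ≤ ((∑ pq ∈ S, (n-1) * n^(2*n-1)
            * (pq.1^(n-1)*pq.2^(n-2) + pq.1^(n-2)*pq.2^(n-1)) : ℕ) : ℚ) := by
      rw [Nat.cast_sum]
      apply Finset.sum_le_sum
      intro pq hpq
      obtain ⟨hbox, _⟩ := Finset.mem_filter.mp hpq
      obtain ⟨hp, hq⟩ := Finset.mem_product.mp hbox
      exact kohn_term_le n pq.1 pq.2 hn (Finset.mem_Icc.mp hp).1 (Finset.mem_Icc.mp hq).1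
    have step2 : (∑ pq ∈ S, (n-1) * n^(2*n-1)
            * (pq.1^(n-1)*pq.2^(n-2) + pq.1^(n-2)*pq.2^(n-1)))
        ≤ 2 * ((n-1) * n^(2*n-1)) * m^n := by
      calc (∑ pq ∈ S, (n-1) * n^(2*n-1)
            * (pq.1^(n-1)*pq.2^(n-2) + pq.1^(n-2)*pq.2^(n-1)))
          = (n-1) * n^(2*n-1) * ((∑ pq ∈ S, pq.1^(n-1)*pq.2^(n-2))
              + ∑ pq ∈ S, pq.1^(n-2)*pq.2^(n-1)) := by
            rw [← Finset.sum_add_distrib, Finset.mul_sum]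
        _ ≤ (n-1) * n^(2*n-1) * (m^n + m^n) :=
            Nat.mul_le_mul_left _ (Nat.add_le_add (kohn_sumA n m hn) (kohn_sumB n m hn))
        _ = 2 * ((n-1) * n^(2*n-1)) * m^n := by ring
    calc _ ≤ _ := step1
      _ ≤ ((2 * ((n-1) * n^(2*n-1)) * m^n : ℕ) : ℚ) := by exact_mod_cast step2
      _ = ((2 * ((n-1) * n^(2*n-1)) : ℕ) : ℚ) * (m:ℚ)^n := by push_cast; ring
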